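/- In ℝ² with K = ℝ²₊, let A₁ be the triangle with vertices (0,0), (3/4,0), (0,3/4), A₂ the trapezium with vertices (1,0), (3/4,0), (0,3/4), (0,1), B₁ the triangle with vertices (0,0), (1,0), (1/2,1/2), and B₂ the triangle with vertices (0,0), (1/2,1/2), (0,1). Then A₁ ∪ A₂ = B₁ ∪ B₂ (so (A₁ ∪ A₂) ⊆ (B₁ ∪ B₂) − K), yet A_i ⊄ B_j − K for all i, j ∈ {1,2}. In particular, the relation ≤_K^u holds for the unions while ≤_K^U fails for the indexed families. -/

import Mathlib

open Set Pointwise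

noncomputable def K4 : Set (ℝ × ℝ) := {p | 0 ≤ p.1 ∧ 0 ≤ p.2}
noncomputable def A4₁ : Set (ℝ × ℝ) := convexHull ℝ {((0:ℝ), (0:ℝ)), (3/4, 0), (0, 3/4)}
noncomputable def A4₂ : Set (ℝ × ℝ) := convexHull ℝ {((1:ℝ), (0:ℝ)), (3/4, 0), (0, 3/4), (0, 1)}
noncomputable def B4₁ : Set (ℝ × ℝ) := convexHull ℝ {((0:ℝ), (0:ℝ)), (1, 0), (1/2, 1/2)}
noncomputable def B4₂ : Set (ℝ × ℝ) := convexHull ℝ {((0:ℝ), (0:ℝ)), (1/2, 1/2), (0, 1)}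

lemma mem_hull3 {a b c : ℝ × ℝ} {α β γ : ℝ} (hα : 0 ≤ α) (hβ : 0 ≤ β) (hγ : 0 ≤ γ)
    (h : α + β + γ = 1) : α • a + β • b + γ • c ∈ convexHull ℝ ({a, b, c} : Set (ℝ × ℝ)) := by
  have hcc := convex_convexHull ℝ ({a, b, c} : Set (ℝ × ℝ))
  have ha : a ∈ convexHull ℝ ({a, b, c} : Set (ℝ × ℝ)) := subset_convexHull ℝ _ (by simp)
  have hb : b ∈ convexHull ℝ ({a, b, c} : Set (ℝ × ℝ)) := subset_convexHull ℝ _ (by simp)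
  have hc : c ∈ convexHull ℝ ({a, b, c} : Set (ℝ × ℝ)) := subset_convexHull ℝ _ (by simp)
  by_cases hβγ : β + γ = 0
  · have hβ0 : β = 0 := by linarith
    have hγ0 : γ = 0 := by linarith
    have hα1 : α = 1 := by linarith
    simpa [hβ0, hγ0, hα1] using ha
  · have hβγ' : 0 < β + γ := lt_of_le_of_ne (by linarith) (Ne.symm hβγ)
    have hq : (β / (β + γ)) • b + (γ / (β + γ)) • c ∈ convexHull ℝ ({a, b, c} : Set (ℝ × ℝ)) :=
      hcc hb hc (by positivity) (by positivity) (by field_simp)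
    have key := hcc ha hq hα (le_of_lt hβγ') (by linarith)
    have : (β + γ) • ((β / (β + γ)) • b + (γ / (β + γ)) • c) = β • b + γ • c := by
      rw [smul_add, smul_smul, smul_smul]
      congr 2 <;> field_simp
    rw [this, ← add_assoc] at key
    exact key

lemma mem_hull4 {a b c d : ℝ × ℝ} {α β γ δ : ℝ} (hα : 0 ≤ α) (hβ : 0 ≤ β) (hγ : 0 ≤ γ)
    (hδ : 0 ≤ δ) (h : α + β + γ + δ = 1) :
    α • a + β • b + γ • c + δ • d ∈ convexHull ℝ ({a, b, c, d} : Set (ℝ × ℝ)) := by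
  have hcc := convex_convexHull ℝ ({a, b, c, d} : Set (ℝ × ℝ))
  have ha : a ∈ convexHull ℝ ({a, b, c, d} : Set (ℝ × ℝ)) := subset_convexHull ℝ _ (by simp)
  have hrest : ({b, c, d} : Set (ℝ × ℝ)) ⊆ ({a, b, c, d} : Set (ℝ × ℝ)) := by
    intro x hx; simp at hx; rcases hx with h | h | h <;> simp [h]
  have hmono := convexHull_mono hrest (𝕜 := ℝ)
  by_cases hβγδ : β + γ + δ = 0
  · have hβ0 : β = 0 := by linarith
    have hγ0 : γ = 0 := by linarith
    have hδ0 : δ = 0 := by linarith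
    have hα1 : α = 1 := by linarith
    simpa [hβ0, hγ0, hδ0, hα1] using ha
  · have hs : 0 < β + γ + δ := lt_of_le_of_ne (by linarith) (Ne.symm hβγδ)
    have hq0 : (β / (β + γ + δ)) • b + (γ / (β + γ + δ)) • c + (δ / (β + γ + δ)) • d ∈
        convexHull ℝ ({b, c, d} : Set (ℝ × ℝ)) :=
      mem_hull3 (by positivity) (by positivity) (by positivity) (by field_simp)
    have hq := hmono hq0
    have key := hcc ha hq hα (le_of_lt hs) (by linarith)
    have heq : (β + γ + δ) • ((β / (β + γ + δ)) • b + (γ / (β + γ + δ)) • c +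
        (δ / (β + γ + δ)) • d) = β • b + γ • c + δ • d := by
      rw [smul_add, smul_add, smul_smul, smul_smul, smul_smul]
      congr 3 <;> field_simp
    rw [heq] at key
    have hre : α • a + β • b + γ • c + δ • d = α • a + (β • b + γ • c + δ • d) := by abel
    rw [hre]
    exact key

def Tset : Set (ℝ × ℝ) := {p | 0 ≤ p.1 ∧ 0 ≤ p.2 ∧ p.1 + p.2 ≤ 1}

lemma convex_Tset : Convex ℝ Tset := by
  intro x hx y hy s t hs ht hst
  obtain ⟨hx1, hx2, hx3⟩ := hx
  obtain ⟨hy1, hy2, hy3⟩ := hy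
  refine ⟨?_, ?_, ?_⟩ <;> simp only [Prod.fst_add, Prod.snd_add, Prod.smul_fst, Prod.smul_snd,
    smul_eq_mul] <;> nlinarith

lemma hAT : A4₁ ∪ A4₂ = Tset := by
  apply Subset.antisymm
  · apply union_subset
    · exact convexHull_min (by
        intro p hp; simp only [mem_insert_iff, mem_singleton_iff] at hp
        rcases hp with h | h | h <;> subst h <;> exact ⟨by norm_num, by norm_num, by norm_num⟩)
        convex_Tset
    · exact convexHull_min (by
        intro p hp; simp only [mem_insert_iff, mem_singleton_iff] at hp
        rcases hp with h | h | h | h <;> subst h <;> exact ⟨by norm_num, by norm_num, by norm_num⟩)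
        convex_Tset
  · rintro ⟨x, y⟩ ⟨hx, hy, hxy⟩
    by_cases hs : x + y ≤ 3/4
    · left
      show _ ∈ convexHull ℝ _
      have := mem_hull3 (a := ((0:ℝ), (0:ℝ))) (b := ((3:ℝ)/4, (0:ℝ))) (c := ((0:ℝ), (3:ℝ)/4))
        (α := 1 - 4/3*(x+y)) (β := 4/3*x) (γ := 4/3*y)
        (by linarith) (by linarith) (by linarith) (by ring)
      convert this using 1
      ext <;> simp <;> ring
    · right
      push_neg at hs
      have hspos : 0 < x + y := by linarith
      show _ ∈ convexHull ℝ _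
      have := mem_hull4 (a := ((1:ℝ), (0:ℝ))) (b := ((3:ℝ)/4, (0:ℝ))) (c := ((0:ℝ), (3:ℝ)/4))
        (d := ((0:ℝ), (1:ℝ)))
        (α := (4*(x+y)-3)*x/(x+y)) (β := (4-4*(x+y))*x/(x+y))
        (γ := (4-4*(x+y))*y/(x+y)) (δ := (4*(x+y)-3)*y/(x+y))
        (div_nonneg (mul_nonneg (by linarith) (by linarith)) (by linarith))
        (div_nonneg (mul_nonneg (by linarith) (by linarith)) (by linarith))
        (div_nonneg (mul_nonneg (by linarith) (by linarith)) (by linarith))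
        (div_nonneg (mul_nonneg (by linarith) (by linarith)) (by linarith))
        (by field_simp; ring)
      convert this using 1
      ext <;> simp <;> field_simp <;> ring

lemma hBT : B4₁ ∪ B4₂ = Tset := by
  apply Subset.antisymm
  · apply union_subset
    · exact convexHull_min (by
        intro p hp; simp only [mem_insert_iff, mem_singleton_iff] at hp
        rcases hp with h | h | h <;> subst h <;> exact ⟨by norm_num, by norm_num, by norm_num⟩)
        convex_Tset
    · exact convexHull_min (by
        intro p hp; simp only [mem_insert_iff, mem_singleton_iff] at hp
        rcases hp with h | h | h <;> subst h <;> exact ⟨by norm_num, by norm_num, by norm_num⟩)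
        convex_Tset
  · rintro ⟨x, y⟩ ⟨hx, hy, hxy⟩
    by_cases hyx : y ≤ x
    · left
      show _ ∈ convexHull ℝ _
      have := mem_hull3 (a := ((0:ℝ), (0:ℝ))) (b := ((1:ℝ), (0:ℝ))) (c := ((1:ℝ)/2, (1:ℝ)/2))
        (α := 1 - x - y) (β := x - y) (γ := 2*y)
        (by linarith) (by linarith) (by linarith) (by ring)
      convert this using 1
      ext <;> simp <;> ring
    · right
      push_neg at hyx
      show _ ∈ convexHull ℝ _
      have := mem_hull3 (a := ((0:ℝ), (0:ℝ))) (b := ((1:ℝ)/2, (1:ℝ)/2)) (c := ((0:ℝ), (1:ℝ)))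
        (α := 1 - x - y) (β := 2*x) (γ := y - x)
        (by linarith) (by linarith) (by linarith) (by ring)
      convert this using 1
      ext <;> simp <;> ring

lemma B4₁_snd_le {p : ℝ × ℝ} (hp : p ∈ B4₁) : p.2 ≤ 1/2 := by
  have : B4₁ ⊆ {q : ℝ × ℝ | q.2 ≤ 1/2} := by
    apply convexHull_min
    · intro q hq; simp only [mem_insert_iff, mem_singleton_iff] at hq
      rcases hq with h | h | h <;> subst h <;> norm_num
    · exact convex_halfSpace_le (LinearMap.isLinear (LinearMap.snd ℝ ℝ ℝ)) _
  exact this hp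

lemma B4₂_fst_le {p : ℝ × ℝ} (hp : p ∈ B4₂) : p.1 ≤ 1/2 := by
  have : B4₂ ⊆ {q : ℝ × ℝ | q.1 ≤ 1/2} := by
    apply convexHull_min
    · intro q hq; simp only [mem_insert_iff, mem_singleton_iff] at hq
      rcases hq with h | h | h <;> subst h <;> norm_num
    · exact convex_halfSpace_le (LinearMap.isLinear (LinearMap.fst ℝ ℝ ℝ)) _
  exact this hp

/-- A₁ ∪ A₂ = B₁ ∪ B₂ (hence ≤_K^u holds for the unions),
    but A_i ⊄ B_j − K for all i, j, so ≤_K^U fails. -/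
theorem stmt_4 :
    A4₁ ∪ A4₂ = B4₁ ∪ B4₂ ∧
    (A4₁ ∪ A4₂) ⊆ (B4₁ ∪ B4₂) - K4 ∧
    ¬ A4₁ ⊆ B4₁ - K4 ∧ ¬ A4₁ ⊆ B4₂ - K4 ∧ ¬ A4₂ ⊆ B4₁ - K4 ∧ ¬ A4₂ ⊆ B4₂ - K4 := by
  have heq : A4₁ ∪ A4₂ = B4₁ ∪ B4₂ := hAT.trans hBT.symm
  refine ⟨heq, ?_, ?_, ?_, ?_, ?_⟩
  · rw [heq]
    intro p hp
    exact ⟨p, hp, 0, ⟨le_refl _, le_refl _⟩, sub_zero p⟩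
  · intro h
    have hm : ((0:ℝ), (3:ℝ)/4) ∈ B4₁ - K4 := h (subset_convexHull ℝ _ (by simp))
    obtain ⟨a, ha, k, hk, hak⟩ := hm
    have h1 : a.2 ≤ 1/2 := B4₁_snd_le ha
    have h2 : a.2 - k.2 = 3/4 := congrArg Prod.snd hak
    have := hk.2
    linarith
  · intro h
    have hm : ((3:ℝ)/4, (0:ℝ)) ∈ B4₂ - K4 := h (subset_convexHull ℝ _ (by simp))
    obtain ⟨a, ha, k, hk, hak⟩ := hm
    have h1 : a.1 ≤ 1/2 := B4₂_fst_le ha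
    have h2 : a.1 - k.1 = 3/4 := congrArg Prod.fst hak
    have := hk.1
    linarith
  · intro h
    have hm : ((0:ℝ), (1:ℝ)) ∈ B4₁ - K4 := h (subset_convexHull ℝ _ (by simp))
    obtain ⟨a, ha, k, hk, hak⟩ := hm
    have h1 : a.2 ≤ 1/2 := B4₁_snd_le ha
    have h2 : a.2 - k.2 = 1 := congrArg Prod.snd hak
    have := hk.2
    linarith
  · intro h
    have hm : ((1:ℝ), (0:ℝ)) ∈ B4₂ - K4 := h (subset_convexHull ℝ _ (by simp))
    obtain ⟨a, ha, k, hk, hak⟩ := hm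
    have h1 : a.1 ≤ 1/2 := B4₂_fst_le ha
    have h2 : a.1 - k.1 = 1 := congrArg Prod.fst hak
    have := hk.1
    linarith
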